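/- For every weak set composition Γ of a finite set, every block discarded by the parkization algorithm on Γ is empty; consequently, the set of nonempty blocks of park(Γ) equals the set of nonempty blocks of Γ. In particular, for a parking function Φ = (A_1, …, A_n) on I and any S ⊆ I, the set of nonempty blocks of park(Φ_{∩S}) equals { A_i ∩ S : 1 ≤ i ≤ n, A_i ∩ S ≠ ∅ }; hence the map π sending a parking function to its set partition of nonempty blocks intertwines the parking-function coproduct Δ_{S,T}(Φ) = park(Φ_{∩S}) ⊗ park(Φ_{∩T}) with the restriction coproduct φ ↦ φ|_S ⊗ φ|_T on set partitions. -/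

import Mathlib

/-!
STATEMENT 7: Every block discarded by the parkization algorithm is empty; consequently the
set of nonempty blocks of `park(Γ)` equals the set of nonempty blocks of `Γ`.  In
particular, for a parking function `Φ` on `I` and `S ⊆ I`, the set of nonempty blocks of
`park(Φ_{∩S})` equals `{ A ∩ S : A a block of Φ, A ∩ S ≠ ∅ }`; hence the map sending a
parking function to its set partition of nonempty blocks intertwines the parkization
coproduct with the restriction coproduct on set partitions.
-/

/-- `L` is a weak set composition of the finite set `I`. -/
def IsWeakSetComp {α : Type*} [DecidableEq α] (I : Finset α) (L : List (Finset α)) : Prop :=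
  L.Pairwise Disjoint ∧ L.foldr (· ∪ ·) ∅ = I

/-- `L` is a parking function on the finite set `I`. -/
def IsParkingFunction {α : Type*} [DecidableEq α] (I : Finset α) (L : List (Finset α)) : Prop :=
  IsWeakSetComp I L ∧ L.length = I.card ∧
    ∀ k, 1 ≤ k → k ≤ L.length → k ≤ ((L.take k).map Finset.card).sum

/-- One pass of the parkization algorithm. -/
def parkAux {α : Type*} [DecidableEq α] :
    List (Finset α) → List (Finset α) → List (Finset α)
  | Φ, [] => Φ
  | Φ, B :: Γ =>
    if (Φ.map Finset.card).sum + B.card ≥ Φ.length + 1 then parkAux (Φ ++ [B]) Γ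
    else parkAux Φ Γ

/-- The parkization of a list of blocks. -/
def park {α : Type*} [DecidableEq α] (Γ : List (Finset α)) : List (Finset α) :=
  parkAux [] Γ

/-- `keptAux s l i Γ`: the set of (0-indexed) positions of blocks of `Γ` kept by the
parkization algorithm, where `s` elements and `l` blocks have been kept so far and the
first block of `Γ` sits at position `i`. -/
def keptAux {α : Type*} [DecidableEq α] : ℕ → ℕ → ℕ → List (Finset α) → Finset ℕ
  | _, _, _, [] => ∅
  | s, l, i, B :: Γ =>
    if s + B.card ≥ l + 1 then insert i (keptAux (s + B.card) (l + 1) (i + 1) Γ)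
    else keptAux s l (i + 1) Γ

/-- The set of positions kept by the parkization algorithm on `Γ`. -/
def kept {α : Type*} [DecidableEq α] (Γ : List (Finset α)) : Finset ℕ :=
  keptAux 0 0 0 Γ

lemma keptAux_empty {α : Type*} [DecidableEq α] :
    ∀ (Γ : List (Finset α)) (s l i : ℕ), l ≤ s →
      ∀ j (h : j < Γ.length), (i + j) ∉ keptAux s l i Γ → Γ[j]'h = ∅
  | [], _, _, _, _, j, h, _ => by simp at h
  | B :: Γ, s, l, i, hls, j, h, hnot => by
    rw [keptAux] at hnot
    split at hnot
    · cases j with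
      | zero => simp at hnot
      | succ j =>
        have := keptAux_empty Γ (s + B.card) (l + 1) (i + 1) (by omega) j
          (by simpa using h) (by
            intro hm; apply hnot
            have : i + (j + 1) = i + 1 + j := by omega
            rw [this]; exact Finset.mem_insert_of_mem hm)
        simpa using this
    · rename_i hcond
      cases j with
      | zero =>
        simp only [List.getElem_cons_zero]
        have : B.card = 0 := by omega
        exact Finset.card_eq_zero.mp this
      | succ j =>
        have := keptAux_empty Γ s l (i + 1) hls j (by simpa using h) (by
          intro hm; apply hnot
          have : i + (j + 1) = i + 1 + j := by omega
          rw [this]; exact hm)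
        simpa using this

lemma mem_parkAux_of_mem_left {α : Type*} [DecidableEq α] :
    ∀ (Γ Φ : List (Finset α)) (B : Finset α), B ∈ Φ → B ∈ parkAux Φ Γ
  | [], Φ, B, h => by rwa [parkAux]
  | C :: Γ, Φ, B, h => by
    rw [parkAux]
    split
    · exact mem_parkAux_of_mem_left Γ _ B (by simp [h])
    · exact mem_parkAux_of_mem_left Γ _ B h

lemma mem_of_mem_parkAux {α : Type*} [DecidableEq α] :
    ∀ (Γ Φ : List (Finset α)) (B : Finset α), B ∈ parkAux Φ Γ → B ∈ Φ ∨ B ∈ Γ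
  | [], Φ, B, h => by rw [parkAux] at h; exact Or.inl h
  | C :: Γ, Φ, B, h => by
    rw [parkAux] at h
    split at h
    · rcases mem_of_mem_parkAux Γ _ B h with h' | h'
      · rcases List.mem_append.mp h' with h'' | h''
        · exact Or.inl h''
        · exact Or.inr (by simp_all)
      · exact Or.inr (List.mem_cons_of_mem _ h')
    · rcases mem_of_mem_parkAux Γ _ B h with h' | h'
      · exact Or.inl h'
      · exact Or.inr (List.mem_cons_of_mem _ h')

lemma mem_parkAux_of_ne_empty {α : Type*} [DecidableEq α] :
    ∀ (Γ Φ : List (Finset α)), Φ.length ≤ (Φ.map Finset.card).sum →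
      ∀ B : Finset α, B ∈ Γ → B ≠ ∅ → B ∈ parkAux Φ Γ
  | [], Φ, _, B, h, _ => by simp at h
  | C :: Γ, Φ, hinv, B, h, hne => by
    rw [parkAux]
    have hinv' : (Φ ++ [C]).length ≤ ((Φ ++ [C]).map Finset.card).sum → True := fun _ => trivial
    rcases List.mem_cons.mp h with rfl | h'
    · have hBpos : 1 ≤ B.card := Finset.card_pos.mpr (Finset.nonempty_iff_ne_empty.mpr hne)
      rw [if_pos (by omega)]
      exact mem_parkAux_of_mem_left Γ _ B (by simp)
    · split
      · rename_i hc
        exact mem_parkAux_of_ne_empty Γ _ (by simp; omega) B h' hne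
      · exact mem_parkAux_of_ne_empty Γ _ hinv B h' hne

lemma park_filter_eq {α : Type*} [DecidableEq α] (Γ : List (Finset α)) :
    (park Γ).toFinset.filter (· ≠ ∅) = Γ.toFinset.filter (· ≠ ∅) := by
  ext B
  simp only [Finset.mem_filter, List.mem_toFinset]
  constructor
  · rintro ⟨h1, h2⟩
    rcases mem_of_mem_parkAux Γ [] B h1 with h | h
    · simp at h
    · exact ⟨h, h2⟩
  · rintro ⟨h1, h2⟩
    exact ⟨mem_parkAux_of_ne_empty Γ [] (by simp) B h1 h2, h2⟩

theorem discarded_blocks_empty {α : Type*} [DecidableEq α] :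
    -- every block discarded by the parkization algorithm is empty
    (∀ Γ : List (Finset α), Γ.Pairwise Disjoint →
      ∀ (i : ℕ) (h : i < Γ.length), i ∉ kept Γ → Γ[i]'h = ∅) ∧
    -- hence `park Γ` and `Γ` have the same nonempty blocks
    (∀ Γ : List (Finset α), Γ.Pairwise Disjoint →
      (park Γ).toFinset.filter (· ≠ ∅) = Γ.toFinset.filter (· ≠ ∅)) ∧
    -- in particular the nonempty blocks of `park (Φ_{∩S})` are the nonempty `A ∩ S`
    (∀ (I S : Finset α) (Φ : List (Finset α)), IsParkingFunction I Φ → S ⊆ I →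
      (park (Φ.map (· ∩ S))).toFinset.filter (· ≠ ∅) =
        (Φ.toFinset.image (· ∩ S)).filter (· ≠ ∅)) := by

  refine ⟨?_, ?_, ?_⟩
  · intro Γ _ i h hnot
    exact keptAux_empty Γ 0 0 0 le_rfl i h (by simpa [kept] using hnot)
  · intro Γ _
    exact park_filter_eq Γ
  · intro I S Φ _ _
    rw [park_filter_eq]
    congr 1
    ext B
    simp [List.mem_toFinset, Finset.mem_image, List.mem_map, eq_comm]
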